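/- Let (F⟨x⟩,σ) be a P-extension of a difference field (F,σ) with σ(x) = α·x, K = const(F,σ). Let (H,σ) be a difference ring extension of (F,σ) with const(H,σ) = K, and λ : F⟨x⟩ → H a difference ring homomorphism with λ|_F = id. Then M((α),F) = {n ∈ ℤ : ∃ g ∈ F*, α^n = σ(g)/g} ≠ {0} if and only if ker(λ) ≠ {0}. -/

import Mathlib

open LaurentPolynomial

private lemma stmt12_sigma'_T {F : Type*} [Field F]
    (σ' : LaurentPolynomial F ≃+* LaurentPolynomial F)
    (α : F) (hα : α ≠ 0) (hT : σ' (T 1) = C α * T 1) (n : ℤ) :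
    σ' (T n) = C (α ^ n) * T n := by
  have hm1 : σ' (T (-1)) = C α⁻¹ * T (-1) := by
    have h1 : σ' (T (-1)) * (C α * T 1) = 1 := by
      rw [← hT, ← map_mul, ← T_add, neg_add_cancel, T_zero, map_one]
    have h2 : (C α⁻¹ * T (-1)) * (C α * T 1) = 1 := by
      rw [mul_mul_mul_comm, ← map_mul, ← T_add, inv_mul_cancel₀ hα, neg_add_cancel, T_zero,
        map_one, mul_one]
    calc σ' (T (-1)) = σ' (T (-1)) * ((C α⁻¹ * T (-1)) * (C α * T 1)) := by rw [h2, mul_one]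
      _ = (C α⁻¹ * T (-1)) * (σ' (T (-1)) * (C α * T 1)) := by ring
      _ = C α⁻¹ * T (-1) := by rw [h1, mul_one]
  induction n using Int.induction_on with
  | zero => simp
  | succ k ih =>
      have h : (T ((k : ℤ) + 1) : LaurentPolynomial F) = T k * T 1 := T_add _ _
      rw [h, map_mul, ih, hT, zpow_add₀ hα, zpow_one, map_mul]
      ring_nf
  | pred k ih =>
      have h : (T (-(k : ℤ) - 1) : LaurentPolynomial F) = T (-k) * T (-1) := by
        rw [← T_add]; ring_nf
      rw [h, map_mul, ih, hm1, show -(k : ℤ) - 1 = -k + -1 by ring, zpow_add₀ hα,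
        show (α : F) ^ (-1 : ℤ) = α⁻¹ by simp, map_mul]
      ring

private lemma stmt12_coeff {F : Type*} [Field F] (σ : F ≃+* F)
    (σ' : LaurentPolynomial F ≃+* LaurentPolynomial F)
    (α : F) (hα : α ≠ 0)
    (hC : ∀ c : F, σ' (C c) = C (σ c))
    (hT : σ' (T 1) = C α * T 1) (f : LaurentPolynomial F) (n : ℤ) :
    (σ' f).coeff n = σ (f.coeff n) * α ^ n := by
  have hsingle : ∀ (i : ℤ) (a : F),
      σ' (AddMonoidAlgebra.single i a) = AddMonoidAlgebra.single i (σ a * α ^ i) := by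
    intro i a
    rw [single_eq_C_mul_T, map_mul, hC, stmt12_sigma'_T σ' α hα hT, single_eq_C_mul_T,
      map_mul]
    ring
  conv_lhs => rw [← AddMonoidAlgebra.sum_coeff_single f]
  rw [map_finsuppSum]
  simp_rw [hsingle]
  rw [AddMonoidAlgebra.coeff_finsuppSum]
  simp_rw [AddMonoidAlgebra.coeff_single]
  rw [Finsupp.sum_apply]
  rw [Finsupp.sum]
  simp_rw [Finsupp.single_apply]
  rw [Finset.sum_ite_eq' f.coeff.support n (fun i => σ (f.coeff i) * α ^ i)]
  by_cases h : n ∈ f.coeff.support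
  · rw [if_pos h]
  · rw [if_neg h]
    rw [Finsupp.notMem_support_iff.mp h, map_zero, zero_mul]

open LaurentPolynomial in
/-- For a P-extension `F⟨x⟩` (Laurent polynomials) of a difference field `F` with
`σ x = α·x`, and a difference ring homomorphism `λ : F⟨x⟩ → H` into an extension `H`
with unchanged constants, `M((α),F) ≠ {0}` iff `ker λ ≠ {0}`. -/
theorem stmt_12 (F H : Type*) [Field F] [CharZero F] [CommRing H]
    (σ : F ≃+* F) (σ' : LaurentPolynomial F ≃+* LaurentPolynomial F)
    (α : F) (hα : α ≠ 0)
    (hC : ∀ c : F, σ' (C c) = C (σ c))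
    (hT : σ' (T 1) = C α * T 1)
    (σH : H ≃+* H) (ιH : F →+* H) (hinj : Function.Injective ιH)
    (hcomm : ∀ c : F, σH (ιH c) = ιH (σ c))
    (hconstH : ∀ h : H, σH h = h → ∃ c : F, σ c = c ∧ h = ιH c)
    (lam : LaurentPolynomial F →+* H)
    (hlamC : ∀ c : F, lam (C c) = ιH c)
    (hlamσ : ∀ f, lam (σ' f) = σH (lam f)) :
    (∃ n : ℤ, n ≠ 0 ∧ ∃ g : F, g ≠ 0 ∧ α ^ n * g = σ g) ↔ RingHom.ker lam ≠ ⊥ := by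
  classical
  constructor
  · rintro ⟨n, hn, g, hg, hrel⟩
    set p : LaurentPolynomial F := C g⁻¹ * T n with hp
    have hσp : σ' p = p := by
      rw [hp, map_mul, hC, stmt12_sigma'_T σ' α hα hT]
      have : σ g⁻¹ * α ^ n = g⁻¹ := by
        rw [map_inv₀, ← hrel, mul_inv]
        field_simp
      rw [← mul_assoc, ← map_mul, this]
    have hfix : σH (lam p) = lam p := by rw [← hlamσ, hσp]
    obtain ⟨c, hc, hpc⟩ := hconstH (lam p) hfix
    set q : LaurentPolynomial F := p - C c with hq
    have hqker : lam q = 0 := by rw [hq, map_sub, hlamC, ← hpc, sub_self]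
    have hqne : q ≠ 0 := by
      intro h0
      have : p = C c := by rwa [hq, sub_eq_zero] at h0
      rw [hp, ← single_eq_C_mul_T] at this
      have hcc : (C c : LaurentPolynomial F) = AddMonoidAlgebra.single 0 c := by
        rw [single_eq_C_mul_T, T_zero, mul_one]
      rw [hcc] at this
      rcases AddMonoidAlgebra.single_inj.mp this with ⟨h1, _⟩ | ⟨h1, _⟩
      · exact hn h1
      · exact inv_ne_zero hg h1
    intro hbot
    have : q ∈ RingHom.ker lam := hqker
    rw [hbot, Ideal.mem_bot] at this
    exact hqne this
  · intro hker
    obtain ⟨f0, hf0mem, hf0ne⟩ := Submodule.ne_bot_iff _ |>.mp hker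
    have hex : ∃ k : ℕ, ∃ f : LaurentPolynomial F,
        lam f = 0 ∧ f ≠ 0 ∧ f.coeff.support.card = k :=
      ⟨_, f0, hf0mem, hf0ne, rfl⟩
    obtain ⟨f, hfker, hfne, hfcard⟩ := Nat.find_spec hex
    have hmin : ∀ m < Nat.find hex, ¬ ∃ f : LaurentPolynomial F,
        lam f = 0 ∧ f ≠ 0 ∧ f.coeff.support.card = m := fun m hm => Nat.find_min hex hm
    -- the support cannot have ≤ 1 elements
    have hone : 1 < f.coeff.support.card := by
      rcases Nat.lt_or_ge 1 f.coeff.support.card with h | h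
      · exact h
      have h01 : f.coeff.support.card = 0 ∨ f.coeff.support.card = 1 := by omega
      rcases h01 with hcard | hcard
      · exact absurd (AddMonoidAlgebra.coeff_eq_zero.mp (Finsupp.support_eq_empty.mp (Finset.card_eq_zero.mp hcard))) hfne
      · obtain ⟨i, a, ha, hfa⟩ := Finsupp.card_support_eq_one'.mp hcard
        have hfa' : f = AddMonoidAlgebra.single i a := AddMonoidAlgebra.coeff_inj.mp hfa
        rw [hfa', single_eq_C_mul_T, map_mul, hlamC] at hfker
        obtain ⟨u, hu⟩ := (isUnit_T (R := F) i).map lam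
        rw [← hu] at hfker
        have : ιH a = 0 := by
          have := congrArg (· * (↑u⁻¹ : H)) hfker
          simpa [mul_assoc] using this
        exact (ha (hinj (by rw [this, map_zero]))).elim
    obtain ⟨i, hi, j, hj, hij⟩ := Finset.one_lt_card.mp hone
    set a : F := f.coeff i with ha
    have hane : a ≠ 0 := Finsupp.mem_support_iff.mp hi
    set b : F := σ a * α ^ i with hb
    have hbne : b ≠ 0 := mul_ne_zero (by simp [hane]) (zpow_ne_zero _ hα)
    set g : LaurentPolynomial F := C b * f - C a * σ' f with hgdef
    have hgker : lam g = 0 := by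
      simp only [hgdef, map_sub, map_mul, hlamσ, hfker, map_zero, mul_zero, sub_zero]
    have hgcoeff : ∀ n : ℤ, g.coeff n = b * f.coeff n - a * (σ (f.coeff n) * α ^ n) := by
      intro n
      rw [hgdef]
      rw [AddMonoidAlgebra.coeff_sub, Finsupp.sub_apply]
      have h1 : (C b * f).coeff n = b * f.coeff n := by
        have : (C b : LaurentPolynomial F) = AddMonoidAlgebra.single 0 b := by
          rw [single_eq_C_mul_T, T_zero, mul_one]
        rw [this]
        exact AddMonoidAlgebra.coeff_single_zero_mul f b n
      have h2 : (C a * σ' f).coeff n = a * (σ' f).coeff n := by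
        have : (C a : LaurentPolynomial F) = AddMonoidAlgebra.single 0 a := by
          rw [single_eq_C_mul_T, T_zero, mul_one]
        rw [this]
        exact AddMonoidAlgebra.coeff_single_zero_mul _ a n
      rw [h1, h2, stmt12_coeff σ σ' α hα hC hT]
    have hgi : g.coeff i = 0 := by
      rw [hgcoeff i, ← ha, ← hb]; ring
    have hgzero : g = 0 := by
      by_contra hgne
      have hsub : g.coeff.support ⊆ f.coeff.support.erase i := by
        intro n hni
        have hgn : g.coeff n ≠ 0 := Finsupp.mem_support_iff.mp hni
        refine Finset.mem_erase.mpr ⟨?_, ?_⟩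
        · rintro rfl; exact hgn hgi
        · refine Finsupp.mem_support_iff.mpr fun h0 => hgn ?_
          rw [hgcoeff n, h0, map_zero, mul_zero, zero_mul, mul_zero, sub_zero]
      have hlt : g.coeff.support.card < f.coeff.support.card := by
        calc g.coeff.support.card ≤ (f.coeff.support.erase i).card := Finset.card_le_card hsub
          _ < f.coeff.support.card := Finset.card_erase_lt_of_mem hi
      rw [hfcard] at hlt
      exact hmin _ hlt ⟨g, hgker, hgne, rfl⟩
    have heq : b * f.coeff j = a * (σ (f.coeff j) * α ^ j) := by
      have := hgcoeff j
      rw [hgzero] at this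
      have h0 : (0 : LaurentPolynomial F).coeff j = 0 := rfl
      rw [h0] at this
      exact sub_eq_zero.mp this.symm
    have hfjne : f.coeff j ≠ 0 := Finsupp.mem_support_iff.mp hj
    refine ⟨i - j, sub_ne_zero.mpr hij, f.coeff j * a⁻¹, mul_ne_zero hfjne (inv_ne_zero hane), ?_⟩
    have hσa : σ a ≠ 0 := by simp [hane]
    rw [map_mul, map_inv₀]
    rw [zpow_sub₀ hα]
    have hαi : (α : F) ^ i ≠ 0 := zpow_ne_zero _ hα
    have hαj : (α : F) ^ j ≠ 0 := zpow_ne_zero _ hα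
    rw [hb] at heq
    -- heq : σ a * α ^ i * f j = a * (σ (f j) * α ^ j)
    field_simp
    linear_combination heq
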